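/- Let A be a commutative ring, p a prime, and g₁,...,g_m, f ∈ A[x₁,...,xₙ]. Suppose cf = f₁g₁ + ... + f_mg_m + r is a pseudo division of f modulo g₁,...,g_m, where c is a product of leading coefficients of the g_j's with c ∉ p and lc(g_j) ∉ p for all j, and r = 0. Then the leading term of σ_p(f) is divisible by lt(σ_p(g_j)) = lt(g_j) for some j. -/

import Mathlib

open MvPolynomial

/-- `t` is the leading term of `P` with respect to the fixed order on monomials. -/
def IsLeadingTermOf {n : ℕ} [LinearOrder (Fin n →₀ ℕ)] {A : Type*} [CommRing A]
    (P : MvPolynomial (Fin n) A) (t : Fin n →₀ ℕ) : Prop :=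
  P.coeff t ≠ 0 ∧ ∀ t', P.coeff t' ≠ 0 → t' ≤ t

/-- The set `lt(I)` of leading terms of nonzero elements of `I`. -/
def ltSet {n : ℕ} [LinearOrder (Fin n →₀ ℕ)] {A : Type*} [CommRing A]
    (I : Ideal (MvPolynomial (Fin n) A)) : Set (Fin n →₀ ℕ) :=
  {t | ∃ P ∈ I, IsLeadingTermOf P t}

/-- The ideal `lc(I,t)` of leading coefficients at `t`. -/
def lcIdeal {n : ℕ} [LinearOrder (Fin n →₀ ℕ)] {A : Type*} [CommRing A]
    (I : Ideal (MvPolynomial (Fin n) A)) (t : Fin n →₀ ℕ) : Ideal A :=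
  Ideal.span {a | ∃ P ∈ I, IsLeadingTermOf P t ∧ P.coeff t = a}

/-- Specialization of pseudo division: let `p` be a prime of `A` and suppose
`c·f = f₁g₁ + … + f_mg_m` is a pseudo division of `f` modulo `g₁,…,g_m` with remainder `0`,
where `c` is a product of leading coefficients of the `g_j`'s with `c ∉ p` and
`lc(g_j) ∉ p` for all `j`.  Then the leading term of `σ_p(f)` is divisible by
`lt(σ_p(g_j)) = lt(g_j)` for some `j`, where `σ_p : A[x] → k(p)[x]` is coefficientwise
reduction to the residue field `k(p) = Frac(A/p)`. -/
theorem leadingTerm_specialization_dvd_of_pseudoDivision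
    {n : ℕ} {A : Type*} [CommRing A] [LinearOrder (Fin n →₀ ℕ)]
    (hadd : ∀ u v w : Fin n →₀ ℕ, u ≤ v → u + w ≤ v + w)
    (hzero : ∀ u : Fin n →₀ ℕ, 0 ≤ u)
    (hwf : WellFounded ((· < ·) : (Fin n →₀ ℕ) → (Fin n →₀ ℕ) → Prop))
    (p : Ideal A) [p.IsPrime]
    {m : ℕ} (g : Fin m → MvPolynomial (Fin n) A) (t : Fin m → (Fin n →₀ ℕ))
    (htg : ∀ j, IsLeadingTermOf (g j) (t j))
    (hlc : ∀ j, (g j).coeff (t j) ∉ p)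
    (f : MvPolynomial (Fin n) A) (F : Fin m → MvPolynomial (Fin n) A) (c : A)
    (hcprod : ∃ l : Multiset (Fin m), c = (l.map fun j => (g j).coeff (t j)).prod)
    (hcp : c ∉ p)
    (hdiv : MvPolynomial.C c * f = ∑ j : Fin m, F j * g j)
    (hFlt : ∀ j u, IsLeadingTermOf (F j) u → ∀ tf, IsLeadingTermOf f tf → u + t j ≤ tf)
    (hcoef : ∀ j u, (F j).coeff u ∈
      Ideal.span {b : A | ∃ u', t j + u ≤ u' ∧ f.coeff u' = b}) :
    let σ : MvPolynomial (Fin n) A →+* MvPolynomial (Fin n) (FractionRing (A ⧸ p)) :=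
      MvPolynomial.map ((algebraMap (A ⧸ p) (FractionRing (A ⧸ p))).comp
        (Ideal.Quotient.mk p))
    ∀ tf, IsLeadingTermOf (σ f) tf →
      ∃ j : Fin m, IsLeadingTermOf (σ (g j)) (t j) ∧ ∃ u, tf = t j + u := by
  intro σ tf htf
  set κ : A →+* FractionRing (A ⧸ p) :=
    (algebraMap (A ⧸ p) (FractionRing (A ⧸ p))).comp (Ideal.Quotient.mk p) with hκdef
  have hκ : ∀ a : A, κ a = 0 ↔ a ∈ p := by
    intro a
    rw [hκdef, RingHom.comp_apply,
      map_eq_zero_iff _ (IsFractionRing.injective (A ⧸ p) (FractionRing (A ⧸ p))),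
      Ideal.Quotient.eq_zero_iff_mem]
  have hσcoeff : ∀ (P : MvPolynomial (Fin n) A) (u : Fin n →₀ ℕ),
      (σ P).coeff u = κ (P.coeff u) := fun P u => MvPolynomial.coeff_map κ P u
  -- coefficient of σ(C c * f) at tf is nonzero
  have hne : (σ (MvPolynomial.C c * f)).coeff tf ≠ 0 := by
    have : σ (MvPolynomial.C c * f) = MvPolynomial.C (κ c) * σ f := by
      rw [map_mul]
      congr 1
      exact MvPolynomial.map_C κ c
    rw [this, MvPolynomial.coeff_C_mul]
    exact mul_ne_zero (by simpa [hκ] using hcp) htf.1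
  rw [hdiv, map_sum] at hne
  rw [MvPolynomial.coeff_sum] at hne
  obtain ⟨j, -, hj⟩ := Finset.exists_ne_zero_of_sum_ne_zero hne
  rw [map_mul, MvPolynomial.coeff_mul] at hj
  obtain ⟨⟨u, v⟩, huv, hj⟩ := Finset.exists_ne_zero_of_sum_ne_zero hj
  rw [Finset.HasAntidiagonal.mem_antidiagonal] at huv
  have hu : (σ (F j)).coeff u ≠ 0 := fun h => hj (by simp [h])
  have hv : (σ (g j)).coeff v ≠ 0 := fun h => hj (by simp [h])
  have hvle : v ≤ t j := (htg j).2 v (fun h => hv (by rw [hσcoeff, h, map_zero]))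
  -- t j + u ≤ tf
  have hle : t j + u ≤ tf := by
    by_contra hlt
    have hsub : {b : A | ∃ u', t j + u ≤ u' ∧ f.coeff u' = b} ⊆ (p : Set A) := by
      rintro b ⟨u', hu', rfl⟩
      by_contra hb
      have hc' : (σ f).coeff u' ≠ 0 := by rw [hσcoeff]; simpa [hκ] using hb
      exact hlt (le_trans hu' (htf.2 u' hc'))
    have hFp : (F j).coeff u ∈ p := Ideal.span_le.mpr hsub (hcoef j u)
    exact hu (by rw [hσcoeff]; exact (hκ _).mpr hFp)
  have heq : tf = t j + u := by
    refine le_antisymm ?_ hle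
    calc tf = v + u := by rw [← huv, add_comm]
      _ ≤ t j + u := hadd v (t j) u hvle
  refine ⟨j, ⟨?_, fun t' ht' => (htg j).2 t' (fun h => ht' (by rw [hσcoeff, h, map_zero]))⟩,
    u, heq⟩
  rw [hσcoeff]
  simpa [hκ] using hlc j
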